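/- Let Γ be a group, Σ ≤ Γ a subgroup and θ : Σ → Γ an injective group homomorphism, and let G = HNN(Γ, Σ, θ) be the corresponding HNN extension with stable letter t. If the HNN extension is non-degenerate (Σ ≠ Γ and θ(Σ) ≠ Γ), then G contains a subgroup isomorphic to the free group on two generators. -/

import Mathlib

open HNNExtension

section Aux

/-- A list with no adjacent pair `(x,b), (x,!b)` is a chain for `a.1 = b.1 → a.2 = b.2`. -/
private lemma chain'_of_no_cancel {α : Type*} :
    ∀ (L : List (α × Bool)), (∀ (L₂ L₃ : List (α × Bool)) (x : α) (b : Bool),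
      L ≠ L₂ ++ (x, b) :: (x, !b) :: L₃) →
    L.Chain' (fun a b => a.1 = b.1 → a.2 = b.2)
  | [] => by simp [List.Chain']
  | [a] => by simp [List.Chain']
  | a :: b :: L => by
    intro h
    rw [List.Chain', List.isChain_cons_cons]
    refine ⟨?_, chain'_of_no_cancel (b :: L) ?_⟩
    · intro hfst
      by_contra hsnd
      have hb2 : b.2 = !a.2 := by
        cases ha : a.2 <;> cases hb : b.2 <;> simp_all
      exact h [] L a.1 a.2 (by
        obtain ⟨a1, a2⟩ := a; obtain ⟨b1, b2⟩ := b
        simp only at hfst hb2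
        simp [hfst, hb2])
    · intro L₂ L₃ x bb hh
      exact h (a :: L₂) L₃ x bb (by rw [hh]; rfl)

private lemma toWord_chain {α : Type*} [DecidableEq α] (x : FreeGroup α) :
    x.toWord.Chain' (fun a b => a.1 = b.1 → a.2 = b.2) := by
  apply chain'_of_no_cancel
  intro L₂ L₃ y b h
  exact FreeGroup.reduce.not (p := False) (L₁ := x.toWord) (L₂ := L₂) (L₃ := L₃)
    (x := y) (b := b) (by rw [FreeGroup.reduce_toWord, h])

variable {G : Type*} [Group G] (g : G)

/-- The group element associated to each generator: `0 ↦ 1`, `1 ↦ g`. -/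
private def cg : Fin 2 → G
  | 0 => 1
  | 1 => g

private def uB : Bool → ℤˣ := fun b => if b then 1 else -1

/-- The head of the HNN reduced word associated to a free word. -/
private def hdw : List (Fin 2 × Bool) → G
  | [] => 1
  | p :: _ => cg g p.1

/-- The list of the HNN reduced word associated to a free word. -/
private def lstw : List (Fin 2 × Bool) → List (ℤˣ × G)
  | [] => []
  | p :: L => (uB p.2, (cg g p.1)⁻¹ * hdw g L) :: lstw L

variable {A B : Subgroup G}

private lemma lstw_chain (hg : ∀ u : ℤˣ, g ∉ toSubgroup A B u) :
    ∀ (L : List (Fin 2 × Bool)), L.Chain' (fun a b => a.1 = b.1 → a.2 = b.2) →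
    (lstw g L).Chain' (fun a b => a.2 ∈ toSubgroup A B a.1 → a.1 = b.1)
  | [] => by simp [lstw, List.Chain']
  | [p] => by simp [lstw, List.Chain']
  | ⟨i, bi⟩ :: ⟨j, bj⟩ :: L => by
    intro h
    rw [List.Chain', List.isChain_cons_cons] at h
    rw [lstw, lstw, List.Chain', List.isChain_cons_cons]
    refine ⟨?_, lstw_chain hg (⟨j, bj⟩ :: L) h.2⟩
    intro hmem
    simp only [hdw] at hmem
    by_cases hpq : i = j
    · simp only [hpq, inv_mul_cancel] at hmem
      have : bi = bj := h.1 hpq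
      rw [this]
    · exfalso
      fin_cases i <;> fin_cases j
      · exact hpq rfl
      · simp only [cg, inv_one, one_mul] at hmem
        exact hg _ hmem
      · simp only [cg, mul_one] at hmem
        exact hg _ (inv_mem_iff.mp hmem)
      · exact hpq rfl

private lemma lstw_prod (φ : A ≃* B) :
    ∀ (L : List (Fin 2 × Bool)),
      of (hdw g L) * ((lstw g L).map
        (fun x => (t : HNNExtension G A B φ) ^ (x.1 : ℤ) * of x.2)).prod =
      (L.map fun x => cond x.2 (of (cg g x.1) * t * (of (cg g x.1))⁻¹)
        (of (cg g x.1) * t * (of (cg g x.1))⁻¹)⁻¹).prod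
  | [] => by simp [hdw, lstw]
  | p :: L => by
    rw [lstw, hdw, List.map_cons, List.map_cons, List.prod_cons, List.prod_cons,
      ← lstw_prod φ L]
    cases hb : p.2 <;>
      simp [uB, map_mul, mul_assoc, zpow_neg]

end Aux

/-- A non-degenerate HNN extension (both associated subgroups proper) contains a copy
of the free group on two generators. -/
theorem hnn_extension_contains_free_group
    (G : Type*) [Group G] (A B : Subgroup G) (φ : A ≃* B)
    (hA : A ≠ ⊤) (hB : B ≠ ⊤) :
    ∃ F : Subgroup (HNNExtension G A B φ), Nonempty (FreeGroup (Fin 2) ≃* F) := by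
  -- find `g ∉ A ∪ B`
  obtain ⟨a, ha⟩ : ∃ a, a ∉ A := by
    by_contra h; push_neg at h; exact hA ((Subgroup.eq_top_iff' A).2 h)
  obtain ⟨b, hb⟩ : ∃ b, b ∉ B := by
    by_contra h; push_neg at h; exact hB ((Subgroup.eq_top_iff' B).2 h)
  obtain ⟨g, hgA, hgB⟩ : ∃ g, g ∉ A ∧ g ∉ B := by
    by_cases haB : a ∈ B
    · by_cases hbA : b ∈ A
      · refine ⟨a * b, fun h => ha ?_, fun h => hb ?_⟩
        · simpa using mul_mem h (inv_mem hbA)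
        · simpa using mul_mem (inv_mem haB) h
      · exact ⟨b, hbA, hb⟩
    · exact ⟨a, ha, haB⟩
  have hg : ∀ u : ℤˣ, g ∉ toSubgroup A B u := by
    intro u
    rcases Int.units_eq_one_or u with rfl | rfl
    · exact hgA
    · exact hgB
  -- the homomorphism from the free group
  let f : FreeGroup (Fin 2) →* HNNExtension G A B φ :=
    FreeGroup.lift (fun i => of (cg g i) * t * (of (cg g i))⁻¹)
  have key : ∀ L : List (Fin 2 × Bool),
      L.Chain' (fun a b => a.1 = b.1 → a.2 = b.2) →
      (L.map fun x => cond x.2 (of (cg g x.1) * t * (of (cg g x.1))⁻¹)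
        ((of (cg g x.1) : HNNExtension G A B φ) * t * (of (cg g x.1))⁻¹)⁻¹).prod = 1 →
      L = [] := by
    intro L hc hp
    have hprod : HNNExtension.NormalWord.ReducedWord.prod φ
        ⟨hdw g L, lstw g L, lstw_chain g hg L hc⟩ = 1 := by
      show of (hdw g L) * _ = 1
      exact (lstw_prod g φ L).trans hp
    have hnil : lstw g L = [] :=
      HNNExtension.ReducedWord.toList_eq_nil_of_mem_of_range φ _
        (by rw [hprod]; exact ⟨1, map_one _⟩)
    cases L with
    | nil => rfl
    | cons p L' => simp [lstw] at hnil
  have hinj : Function.Injective f := by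
    rw [injective_iff_map_eq_one]
    intro x hx
    rw [← FreeGroup.mk_toWord (x := x), FreeGroup.lift_mk] at hx
    have := key x.toWord (toWord_chain x) hx
    rwa [← FreeGroup.toWord_eq_nil_iff]
  exact ⟨f.range, ⟨MonoidHom.ofInjective hinj⟩⟩
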